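/- Let p ≥ 1, α > 1/p, and f ∈ C([0,1];ℝ). Then there is a constant C_{α,p} depending only on α and p such that for all s,t ∈ [0,1]: |f(t) − f(s)| ≤ C_{α,p} (∫₀¹∫₀¹ |f(u)−f(v)|^p / |u−v|^{αp+1} du dv)^{1/p} · |t−s|^{α − 1/p}. -/

import Mathlib

open MeasureTheory Set
open scoped ENNReal

namespace GRR

/-- The GRR double integral. -/
noncomputable def Q (p α : ℝ) (f : ℝ → ℝ) : ℝ≥0∞ :=
  ∫⁻ u in Icc (0 : ℝ) 1, ∫⁻ v in Icc (0 : ℝ) 1,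
    ENNReal.ofReal (|f u - f v| ^ p) / ENNReal.ofReal (|u - v| ^ (α * p + 1))

variable {p α : ℝ} {f : ℝ → ℝ}

lemma hp0 (hp : 1 ≤ p) : 0 < p := lt_of_lt_of_le one_pos hp

lemma hβ0 (hp : 1 ≤ p) (hα : 1 / p < α) : 0 < α - 1 / p := sub_pos.2 hα

lemma hα0 (hp : 1 ≤ p) (hα : 1 / p < α) : 0 < α :=
  lt_trans (div_pos one_pos (hp0 hp)) hα

lemma hexp0 (hp : 1 ≤ p) (hα : 1 / p < α) : 0 < α * p + 1 := by
  have := hα0 hp hα; have := hp0 hp; positivity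

/-- Pointwise bound used for the rectangle estimate. -/
lemma pointwise_bound (hp : 1 ≤ p) (hα : 1 / p < α) {u v ℓ : ℝ} (h : |u - v| ≤ ℓ) :
    ENNReal.ofReal (|f u - f v| ^ p)
      ≤ ENNReal.ofReal (|f u - f v| ^ p) / ENNReal.ofReal (|u - v| ^ (α * p + 1))
          * ENNReal.ofReal (ℓ ^ (α * p + 1)) := by
  rcases eq_or_ne u v with rfl | huv
  · simp [Real.zero_rpow (ne_of_gt (hp0 hp))]
  · have h0 : 0 < |u - v| := abs_pos.2 (sub_ne_zero.2 huv)
    have hy0 : 0 < |u - v| ^ (α * p + 1) := Real.rpow_pos_of_pos h0 _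
    set y := ENNReal.ofReal (|u - v| ^ (α * p + 1)) with hy
    have hyne : y ≠ 0 := by
      simp [hy, ENNReal.ofReal_pos.2 hy0, ne_of_gt (ENNReal.ofReal_pos.2 hy0)]
    have hytop : y ≠ ⊤ := ENNReal.ofReal_ne_top
    calc ENNReal.ofReal (|f u - f v| ^ p)
        = ENNReal.ofReal (|f u - f v| ^ p) / y * y :=
          (ENNReal.div_mul_cancel hyne hytop).symm
      _ ≤ _ := by
          gcongr
          exact ENNReal.ofReal_le_ofReal
            (Real.rpow_le_rpow (abs_nonneg _) h (le_of_lt (hexp0 hp hα)))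

/-- Rectangle estimate: the `p`-energy over a square is controlled by `Q`. -/
lemma rect_bound (hp : 1 ≤ p) (hα : 1 / p < α) {a b : ℝ}
    (hI : Icc a b ⊆ Icc (0 : ℝ) 1) :
    (∫⁻ u in Icc a b, ∫⁻ v in Icc a b, ENNReal.ofReal (|f u - f v| ^ p))
      ≤ Q p α f * ENNReal.ofReal ((b - a) ^ (α * p + 1)) := by
  set c := ENNReal.ofReal ((b - a) ^ (α * p + 1)) with hc
  have hctop : c ≠ ⊤ := ENNReal.ofReal_ne_top
  calc (∫⁻ u in Icc a b, ∫⁻ v in Icc a b, ENNReal.ofReal (|f u - f v| ^ p))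
      ≤ ∫⁻ u in Icc a b,
          ((∫⁻ v in Icc a b,
            ENNReal.ofReal (|f u - f v| ^ p) / ENNReal.ofReal (|u - v| ^ (α * p + 1))) * c) := by
        refine setLIntegral_mono' measurableSet_Icc fun u hu => ?_
        rw [← lintegral_mul_const' c _ hctop]
        refine setLIntegral_mono' measurableSet_Icc fun v hv => ?_
        refine pointwise_bound hp hα ?_
        rw [abs_sub_le_iff]
        constructor <;> · obtain ⟨h1, h2⟩ := hu; obtain ⟨h3, h4⟩ := hv; linarith
    _ = (∫⁻ u in Icc a b, ∫⁻ v in Icc a b,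
          ENNReal.ofReal (|f u - f v| ^ p) / ENNReal.ofReal (|u - v| ^ (α * p + 1))) * c :=
        lintegral_mul_const' c _ hctop
    _ ≤ Q p α f * c := by
        refine mul_le_mul_left ?_ c
        calc (∫⁻ u in Icc a b, ∫⁻ v in Icc a b,
              ENNReal.ofReal (|f u - f v| ^ p) / ENNReal.ofReal (|u - v| ^ (α * p + 1)))
            ≤ ∫⁻ u in Icc a b, ∫⁻ v in Icc (0:ℝ) 1,
              ENNReal.ofReal (|f u - f v| ^ p) / ENNReal.ofReal (|u - v| ^ (α * p + 1)) :=
              lintegral_mono fun u => lintegral_mono_set hI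
          _ ≤ Q p α f := lintegral_mono_set hI

/-- The average of `f` on `[a,b]`. -/
noncomputable def avg (f : ℝ → ℝ) (a b : ℝ) : ℝ := (b - a)⁻¹ * ∫ x in Icc a b, f x

section cont

variable (hf : ContinuousOn f (Icc (0 : ℝ) 1))

lemma G_contOn (hf : ContinuousOn f (Icc (0 : ℝ) 1)) :
    ContinuousOn (fun z : ℝ × ℝ => |f z.1 - f z.2|) (Icc (0:ℝ) 1 ×ˢ Icc (0:ℝ) 1) :=
  ((hf.comp continuous_fst.continuousOn fun _ hz => hz.1).sub
    (hf.comp continuous_snd.continuousOn fun _ hz => hz.2)).abs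

lemma Gsub_contOn (hf : ContinuousOn f (Icc (0 : ℝ) 1)) :
    ContinuousOn (fun z : ℝ × ℝ => f z.1 - f z.2) (Icc (0:ℝ) 1 ×ˢ Icc (0:ℝ) 1) :=
  (hf.comp continuous_fst.continuousOn fun _ hz => hz.1).sub
    (hf.comp continuous_snd.continuousOn fun _ hz => hz.2)

lemma Gp_contOn (hp : 1 ≤ p) (hf : ContinuousOn f (Icc (0 : ℝ) 1)) :
    ContinuousOn (fun z : ℝ × ℝ => |f z.1 - f z.2| ^ p) (Icc (0:ℝ) 1 ×ˢ Icc (0:ℝ) 1) :=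
  (G_contOn hf).rpow_const fun _ _ => Or.inr (le_of_lt (hp0 hp))

lemma integrableOn_rect {g : ℝ × ℝ → ℝ}
    (hg : ContinuousOn g (Icc (0:ℝ) 1 ×ˢ Icc (0:ℝ) 1)) {a b a' b' : ℝ}
    (h1 : Icc a b ⊆ Icc (0:ℝ) 1) (h2 : Icc a' b' ⊆ Icc (0:ℝ) 1) :
    IntegrableOn g (Icc a b ×ˢ Icc a' b') (volume.prod volume) :=
  (hg.mono (prod_mono h1 h2)).integrableOn_compact (isCompact_Icc.prod isCompact_Icc)

end cont

/-- If `f` is within `ε` of `f x` on `[a,b]`, so is the average. -/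
lemma avg_close (hf : ContinuousOn f (Icc (0 : ℝ) 1)) {a b x ε : ℝ} (hab : a < b)
    (hsub : Icc a b ⊆ Icc (0 : ℝ) 1)
    (hε : ∀ u ∈ Icc a b, |f u - f x| ≤ ε) :
    |avg f a b - f x| ≤ ε := by
  have hi : IntegrableOn f (Icc a b) volume := (hf.mono hsub).integrableOn_Icc
  have hℓ : (0:ℝ) < b - a := sub_pos.2 hab
  have hε0 : 0 ≤ ε := le_trans (abs_nonneg _) (hε a ⟨le_refl a, hab.le⟩)
  have h1 : ∫ u in Icc a b, (f u - f x) = (∫ u in Icc a b, f u) - (b - a) * f x := by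
    rw [integral_sub hi (integrableOn_const (by simp [Real.volume_Icc, hℓ.le]) (by simp))]
    simp [Real.volume_Icc, ENNReal.toReal_ofReal hℓ.le, mul_comm, hab.le]
  have h2 : ‖∫ u in Icc a b, (f u - f x)‖ ≤ ε * (volume (Icc a b)).toReal :=
    norm_setIntegral_le_of_norm_le_const (by simp [Real.volume_Icc])
      fun u hu => hε u hu
  rw [Real.norm_eq_abs, h1] at h2
  have h3 : avg f a b - f x = (b - a)⁻¹ * ((∫ u in Icc a b, f u) - (b - a) * f x) := by
    unfold avg
    rw [mul_sub, ← mul_assoc, inv_mul_cancel₀ hℓ.ne', one_mul]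
  rw [h3, abs_mul, abs_inv, abs_of_pos hℓ]
  rw [Real.volume_Icc, ENNReal.toReal_ofReal hℓ.le] at h2
  calc (b - a)⁻¹ * |(∫ u in Icc a b, f u) - (b - a) * f x| ≤ (b - a)⁻¹ * (ε * (b - a)) := by
        gcongr
    _ = ε := by field_simp

/-- Difference of averages controlled by a double integral. -/
lemma avg_diff (hf : ContinuousOn f (Icc (0 : ℝ) 1)) {a₁ b₁ a₂ b₂ : ℝ}
    (h21 : a₂ ≤ a₁) (h12 : b₁ ≤ b₂) (h1 : a₁ < b₁) (h2 : a₂ < b₂)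
    (hsub : Icc a₂ b₂ ⊆ Icc (0 : ℝ) 1) :
    |avg f a₁ b₁ - avg f a₂ b₂|
      ≤ (b₂ - a₂)⁻¹ * (b₁ - a₁)⁻¹ *
        ∫ z in Icc a₂ b₂ ×ˢ Icc a₁ b₁, |f z.1 - f z.2| ∂(volume.prod volume) := by
  have hsub1 : Icc a₁ b₁ ⊆ Icc (0:ℝ) 1 := (Icc_subset_Icc h21 h12).trans hsub
  have hℓ₂ : (0:ℝ) < b₂ - a₂ := sub_pos.2 h2
  have hℓ₁ : (0:ℝ) < b₁ - a₁ := sub_pos.2 h1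
  have hi₂ : IntegrableOn f (Icc a₂ b₂) volume := (hf.mono hsub).integrableOn_Icc
  have hi₁ : IntegrableOn f (Icc a₁ b₁) volume := (hf.mono hsub1).integrableOn_Icc
  have hint : IntegrableOn (fun z : ℝ × ℝ => f z.1 - f z.2) (Icc a₂ b₂ ×ˢ Icc a₁ b₁)
      (volume.prod volume) := integrableOn_rect (Gsub_contOn hf) hsub hsub1
  have key : ∫ z in Icc a₂ b₂ ×ˢ Icc a₁ b₁, (f z.1 - f z.2) ∂(volume.prod volume)
      = (b₁ - a₁) * (∫ u in Icc a₂ b₂, f u) - (b₂ - a₂) * ∫ v in Icc a₁ b₁, f v := by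
    rw [setIntegral_prod _ hint]
    have hinner : ∀ u : ℝ, ∫ v in Icc a₁ b₁, (f u - f v)
        = (b₁ - a₁) * f u - ∫ v in Icc a₁ b₁, f v := by
      intro u
      rw [integral_sub (integrableOn_const (μ := volume) (s := Icc a₁ b₁) (C := f u)
        (by simp [Real.volume_Icc, hℓ₁.le]) (by simp)) hi₁]
      simp [Real.volume_Icc, ENNReal.toReal_ofReal hℓ₁.le, mul_comm, h1.le]
    simp_rw [hinner]
    rw [integral_sub (hi₂.const_mul _)
      (integrableOn_const (by simp [Real.volume_Icc, hℓ₂.le]) (by simp))]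
    rw [integral_const_mul, integral_const]
    simp [Real.volume_Icc, ENNReal.toReal_ofReal hℓ₂.le, smul_eq_mul, h2.le]
  have hrepr : avg f a₂ b₂ - avg f a₁ b₁
      = (b₂ - a₂)⁻¹ * (b₁ - a₁)⁻¹ *
        ∫ z in Icc a₂ b₂ ×ˢ Icc a₁ b₁, (f z.1 - f z.2) ∂(volume.prod volume) := by
    rw [key, avg, avg]
    field_simp
  have habs : |avg f a₁ b₁ - avg f a₂ b₂|
      = (b₂ - a₂)⁻¹ * (b₁ - a₁)⁻¹ *
        |∫ z in Icc a₂ b₂ ×ˢ Icc a₁ b₁, (f z.1 - f z.2) ∂(volume.prod volume)| := by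
    rw [abs_sub_comm, hrepr, abs_mul, abs_mul, abs_inv, abs_inv,
      abs_of_pos hℓ₂, abs_of_pos hℓ₁]
  rw [habs]
  gcongr
  calc |∫ z in Icc a₂ b₂ ×ˢ Icc a₁ b₁, (f z.1 - f z.2) ∂(volume.prod volume)|
      ≤ ∫ z in Icc a₂ b₂ ×ˢ Icc a₁ b₁, |f z.1 - f z.2| ∂(volume.prod volume) := by
        simpa using
          norm_integral_le_integral_norm (μ := (volume.prod volume).restrict
            (Icc a₂ b₂ ×ˢ Icc a₁ b₁)) (fun z : ℝ × ℝ => f z.1 - f z.2)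
    _ ≤ _ := le_refl _

lemma aemeas_rect {g : ℝ × ℝ → ℝ} (hg : ContinuousOn g (Icc (0:ℝ) 1 ×ˢ Icc (0:ℝ) 1))
    {a b a' b' : ℝ} (h1 : Icc a b ⊆ Icc (0:ℝ) 1) (h2 : Icc a' b' ⊆ Icc (0:ℝ) 1) :
    AEMeasurable (fun z => ENNReal.ofReal (g z))
      ((volume.restrict (Icc a b)).prod (volume.restrict (Icc a' b'))) := by
  rw [Measure.prod_restrict]
  exact ENNReal.measurable_ofReal.comp_aemeasurable
    ((hg.mono (prod_mono h1 h2)).aemeasurable (measurableSet_Icc.prod measurableSet_Icc))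

lemma prodGp_bound (hp : 1 ≤ p) (hα : 1 / p < α) (hf : ContinuousOn f (Icc (0 : ℝ) 1))
    {a₁ b₁ a₂ b₂ : ℝ} (h21 : a₂ ≤ a₁) (h12 : b₁ ≤ b₂) (hsub : Icc a₂ b₂ ⊆ Icc (0 : ℝ) 1) :
    (∫⁻ z in Icc a₂ b₂ ×ˢ Icc a₁ b₁, ENNReal.ofReal (|f z.1 - f z.2| ^ p)
        ∂(volume.prod volume))
      ≤ Q p α f * ENNReal.ofReal ((b₂ - a₂) ^ (α * p + 1)) := by
  have hsub1 : Icc a₁ b₁ ⊆ Icc (0:ℝ) 1 := (Icc_subset_Icc h21 h12).trans hsub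
  rw [← Measure.prod_restrict, lintegral_prod _ (aemeas_rect (Gp_contOn hp hf) hsub hsub1)]
  calc (∫⁻ u in Icc a₂ b₂, ∫⁻ v in Icc a₁ b₁, ENNReal.ofReal (|f u - f v| ^ p))
      ≤ ∫⁻ u in Icc a₂ b₂, ∫⁻ v in Icc a₂ b₂, ENNReal.ofReal (|f u - f v| ^ p) :=
        lintegral_mono fun u => lintegral_mono_set (Icc_subset_Icc h21 h12)
    _ ≤ _ := rect_bound hp hα hsub

lemma holder_step (hp : 1 ≤ p) (hα : 1 / p < α) (hf : ContinuousOn f (Icc (0 : ℝ) 1))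
    {a₁ b₁ a₂ b₂ : ℝ} (h21 : a₂ ≤ a₁) (h12 : b₁ ≤ b₂) (hsub : Icc a₂ b₂ ⊆ Icc (0 : ℝ) 1) :
    ENNReal.ofReal (∫ z in Icc a₂ b₂ ×ˢ Icc a₁ b₁, |f z.1 - f z.2| ∂(volume.prod volume))
      ≤ (Q p α f * ENNReal.ofReal ((b₂ - a₂) ^ (α * p + 1))) ^ (1/p)
        * (ENNReal.ofReal (b₂ - a₂) * ENNReal.ofReal (b₁ - a₁)) ^ (1 - 1/p) := by
  have hsub1 : Icc a₁ b₁ ⊆ Icc (0:ℝ) 1 := (Icc_subset_Icc h21 h12).trans hsub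
  have hint : IntegrableOn (fun z : ℝ × ℝ => |f z.1 - f z.2|) (Icc a₂ b₂ ×ˢ Icc a₁ b₁)
      (volume.prod volume) := integrableOn_rect (G_contOn hf) hsub hsub1
  rw [ofReal_integral_eq_lintegral_ofReal hint (ae_of_all _ fun z => abs_nonneg _),
    ← Measure.prod_restrict]
  set μR := (volume.restrict (Icc a₂ b₂)).prod (volume.restrict (Icc a₁ b₁)) with hμR
  set g : ℝ × ℝ → ℝ≥0∞ := fun z => ENNReal.ofReal |f z.1 - f z.2| with hg
  have hμuniv : μR univ = ENNReal.ofReal (b₂ - a₂) * ENNReal.ofReal (b₁ - a₁) := by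
    rw [hμR, ← univ_prod_univ, Measure.prod_prod]
    simp [Real.volume_Icc]
  have hgmeas : AEMeasurable g μR := aemeas_rect (G_contOn hf) hsub hsub1
  have hGp : (∫⁻ z, g z ^ p ∂μR) ≤ Q p α f * ENNReal.ofReal ((b₂ - a₂) ^ (α * p + 1)) := by
    have hpow : ∀ z : ℝ × ℝ, g z ^ p = ENNReal.ofReal (|f z.1 - f z.2| ^ p) := fun z =>
      ENNReal.ofReal_rpow_of_nonneg (abs_nonneg _) (le_of_lt (hp0 hp))
    simp_rw [hpow]
    rw [hμR, Measure.prod_restrict]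
    exact prodGp_bound hp hα hf h21 h12 hsub
  rcases eq_or_lt_of_le hp with heq | hlt
  · -- p = 1
    have h1p : (1:ℝ)/p = 1 := by rw [← heq]; norm_num
    rw [h1p]
    simp only [sub_self, ENNReal.rpow_one, ENNReal.rpow_zero, mul_one]
    calc (∫⁻ z, g z ∂μR) = ∫⁻ z, g z ^ p ∂μR := by
          rw [← heq]; simp [ENNReal.rpow_one]
      _ ≤ _ := hGp
  · -- 1 < p
    have hpq := Real.HolderConjugate.conjExponent hlt
    set q := Real.conjExponent p with hq
    have hqinv : 1/q = 1 - 1/p := by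
      have h := hpq.inv_add_inv_eq_one
      rw [one_div, one_div]
      linarith
    have hH := ENNReal.lintegral_mul_le_Lp_mul_Lq μR hpq hgmeas
      (aemeasurable_const (b := (1:ℝ≥0∞)))
    simp only [Pi.mul_apply, mul_one, ENNReal.one_rpow, lintegral_one] at hH
    calc (∫⁻ z, g z ∂μR)
        ≤ (∫⁻ z, g z ^ p ∂μR) ^ (1/p) * (μR univ) ^ (1/q) := hH
      _ ≤ _ := by
          rw [hqinv, hμuniv]
          gcongr

/-- One chaining step: difference of averages over an interval and a half-length subinterval. -/
lemma step (hp : 1 ≤ p) (hα : 1 / p < α) (hf : ContinuousOn f (Icc (0 : ℝ) 1))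
    (hQtop : Q p α f ≠ ⊤) {a₁ b₁ a₂ b₂ : ℝ}
    (h21 : a₂ ≤ a₁) (h12 : b₁ ≤ b₂) (h1 : a₁ < b₁) (hhalf : b₁ - a₁ = (b₂ - a₂) / 2)
    (hsub : Icc a₂ b₂ ⊆ Icc (0 : ℝ) 1) :
    |avg f a₁ b₁ - avg f a₂ b₂|
      ≤ ((Q p α f) ^ (1/p)).toReal * ((2:ℝ) ^ (1/p) * (b₂ - a₂) ^ (α - 1/p)) := by
  have hpp := hp0 hp
  set t := 1/p with ht
  have ht0 : 0 < t := by positivity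
  set ℓ := b₂ - a₂ with hℓdef
  have hd1 : 0 < b₁ - a₁ := sub_pos.2 h1
  have hℓ : 0 < ℓ := by rw [hℓdef]; linarith [hhalf ▸ hd1]
  have h2 : a₂ < b₂ := by linarith
  have hc0 : (0:ℝ) ≤ ℓ⁻¹ * (b₁ - a₁)⁻¹ := by positivity
  -- ENNReal chain
  have hchain : ENNReal.ofReal |avg f a₁ b₁ - avg f a₂ b₂|
      ≤ ENNReal.ofReal (ℓ⁻¹ * (b₁ - a₁)⁻¹) *
        ((Q p α f * ENNReal.ofReal (ℓ ^ (α * p + 1))) ^ t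
          * (ENNReal.ofReal ℓ * ENNReal.ofReal (b₁ - a₁)) ^ (1 - t)) := by
    calc ENNReal.ofReal |avg f a₁ b₁ - avg f a₂ b₂|
        ≤ ENNReal.ofReal (ℓ⁻¹ * (b₁ - a₁)⁻¹ *
            ∫ z in Icc a₂ b₂ ×ˢ Icc a₁ b₁, |f z.1 - f z.2| ∂(volume.prod volume)) :=
          ENNReal.ofReal_le_ofReal (avg_diff hf h21 h12 h1 h2 hsub)
      _ = ENNReal.ofReal (ℓ⁻¹ * (b₁ - a₁)⁻¹) *
            ENNReal.ofReal (∫ z in Icc a₂ b₂ ×ˢ Icc a₁ b₁, |f z.1 - f z.2|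
              ∂(volume.prod volume)) := ENNReal.ofReal_mul hc0
      _ ≤ _ := mul_le_mul_right (holder_step hp hα hf h21 h12 hsub) _
  -- identify the right-hand side as `Q^(1/p) * ofReal (real stuff)`
  have hrpow1 : (ENNReal.ofReal (ℓ ^ (α * p + 1))) ^ t
      = ENNReal.ofReal (ℓ ^ ((α * p + 1) * t)) := by
    rw [ENNReal.ofReal_rpow_of_pos (Real.rpow_pos_of_pos hℓ _), ← Real.rpow_mul hℓ.le]
  have hrpow2 : (ENNReal.ofReal ℓ * ENNReal.ofReal (b₁ - a₁)) ^ (1 - t)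
      = ENNReal.ofReal ((ℓ * (b₁ - a₁)) ^ (1 - t)) := by
    rw [← ENNReal.ofReal_mul hℓ.le, ENNReal.ofReal_rpow_of_pos (by positivity)]
  have hmulpow : (Q p α f * ENNReal.ofReal (ℓ ^ (α * p + 1))) ^ t
      = (Q p α f) ^ t * ENNReal.ofReal (ℓ ^ ((α * p + 1) * t)) := by
    rw [ENNReal.mul_rpow_of_nonneg _ _ ht0.le, hrpow1]
  -- the real computation
  have hreal : ℓ⁻¹ * (b₁ - a₁)⁻¹ * (ℓ ^ ((α * p + 1) * t) * (ℓ * (b₁ - a₁)) ^ (1 - t))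
      = (2:ℝ) ^ t * ℓ ^ (α - t) := by
    have hb1 : b₁ - a₁ = ℓ / 2 := hhalf
    have hpt : p * t = 1 := by rw [ht]; field_simp
    have hexp : (α * p + 1) * t = α + t := by
      have : α * p * t = α := by rw [mul_assoc, hpt, mul_one]
      ring_nf
      ring_nf at this
      nlinarith [this]
    rw [hb1, hexp]
    have h2pos : (0:ℝ) < 2 := two_pos
    have hℓne : ℓ ≠ 0 := ne_of_gt hℓ
    have h2ne : (2:ℝ) ^ (1 - t) ≠ 0 := ne_of_gt (Real.rpow_pos_of_pos h2pos _)
    have e1 : (ℓ * (ℓ / 2)) ^ (1 - t) = ℓ ^ (1-t) * (ℓ ^ (1-t) / 2 ^ (1-t)) := by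
      rw [Real.mul_rpow hℓ.le (by positivity), Real.div_rpow hℓ.le h2pos.le]
    have e2 : ℓ ^ (α + t) * ℓ ^ (1-t) * ℓ ^ (1-t) = ℓ ^ (α - t) * (ℓ * ℓ) := by
      rw [← Real.rpow_add hℓ, ← Real.rpow_add hℓ,
        show α + t + (1 - t) + (1 - t) = (α - t) + 2 by ring,
        Real.rpow_add hℓ, show (2:ℝ) = ((2:ℕ):ℝ) by norm_num, Real.rpow_natCast]
      ring
    have e3 : (2:ℝ) * (2 ^ (1 - t))⁻¹ = 2 ^ t := by
      have h4 : (2:ℝ) ^ t * 2 ^ (1 - t) = 2 := by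
        rw [← Real.rpow_add h2pos, show t + (1 - t) = (1:ℝ) by ring, Real.rpow_one]
      field_simp
      linarith
    rw [e1]
    calc ℓ⁻¹ * (ℓ / 2)⁻¹ * (ℓ ^ (α + t) * (ℓ ^ (1-t) * (ℓ ^ (1-t) / 2 ^ (1-t))))
        = (ℓ ^ (α + t) * ℓ ^ (1-t) * ℓ ^ (1-t)) * (2 * (2 ^ (1-t))⁻¹) * (ℓ⁻¹ * ℓ⁻¹) := by
          rw [inv_div]; ring
      _ = (ℓ ^ (α - t) * (ℓ * ℓ)) * ((2:ℝ) ^ t) * (ℓ⁻¹ * ℓ⁻¹) := by rw [e2, e3]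
      _ = (2:ℝ) ^ t * ℓ ^ (α - t) * ((ℓ * ℓ⁻¹) * (ℓ * ℓ⁻¹)) := by ring
      _ = (2:ℝ) ^ t * ℓ ^ (α - t) := by rw [mul_inv_cancel₀ hℓne]; ring
  have hQt : (Q p α f) ^ t ≠ ⊤ := ENNReal.rpow_ne_top_of_nonneg ht0.le hQtop
  have hfinal : ENNReal.ofReal (ℓ⁻¹ * (b₁ - a₁)⁻¹) *
      ((Q p α f) ^ t * ENNReal.ofReal (ℓ ^ ((α * p + 1) * t))
        * ENNReal.ofReal ((ℓ * (b₁ - a₁)) ^ (1 - t)))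
      = ENNReal.ofReal (((Q p α f) ^ t).toReal * ((2:ℝ) ^ t * ℓ ^ (α - t))) := by
    rw [ENNReal.ofReal_mul ENNReal.toReal_nonneg, ENNReal.ofReal_toReal hQt, ← hreal]
    rw [ENNReal.ofReal_mul hc0, ENNReal.ofReal_mul (by positivity : (0:ℝ) ≤ ℓ ^ ((α*p+1)*t))]
    ring
  have : ENNReal.ofReal |avg f a₁ b₁ - avg f a₂ b₂|
      ≤ ENNReal.ofReal (((Q p α f) ^ t).toReal * ((2:ℝ) ^ t * ℓ ^ (α - t))) := by
    rw [← hfinal]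
    calc ENNReal.ofReal |avg f a₁ b₁ - avg f a₂ b₂| ≤ _ := hchain
      _ = _ := by rw [hmulpow, hrpow2]
  rw [ENNReal.ofReal_le_ofReal_iff (by positivity)] at this
  exact this

/-- Chaining along a sequence of halving intervals shrinking to `x`. -/
lemma chain (hp : 1 ≤ p) (hα : 1 / p < α) (hf : ContinuousOn f (Icc (0:ℝ) 1))
    (hQtop : Q p α f ≠ ⊤) {a b x : ℝ} (hab : a < b) (hsub : Icc a b ⊆ Icc (0:ℝ) 1)
    (c e : ℕ → ℝ) (hc0 : c 0 = a) (he0 : e 0 = b)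
    (hlen : ∀ n, e n - c n = (b - a) / 2 ^ n)
    (hcmono : ∀ n, c n ≤ c (n + 1)) (hemono : ∀ n, e (n + 1) ≤ e n)
    (hx : ∀ n, x ∈ Icc (c n) (e n)) :
    |f x - avg f a b|
      ≤ ((Q p α f) ^ (1/p)).toReal *
        ((2:ℝ) ^ (1/p) * (1 - (2:ℝ) ^ (-(α - 1/p)))⁻¹ * (b - a) ^ (α - 1/p)) := by
  have hpp := hp0 hp
  set β := α - 1/p with hβ
  have hβpos : 0 < β := hβ0 hp hα
  set d := b - a with hd
  have hdpos : 0 < d := sub_pos.2 hab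
  set K := ((Q p α f) ^ (1/p)).toReal with hK
  have hK0 : 0 ≤ K := ENNReal.toReal_nonneg
  set r := (2:ℝ) ^ (-β) with hr
  have hr0 : 0 < r := Real.rpow_pos_of_pos two_pos _
  have hr1 : r < 1 := Real.rpow_lt_one_of_one_lt_of_neg one_lt_two (neg_lt_zero.2 hβpos)
  have h1r : 0 < 1 - r := by linarith
  set M := K * ((2:ℝ) ^ (1/p) * d ^ β) with hM
  have hM0 : 0 ≤ M := by
    have : (0:ℝ) ≤ (2:ℝ) ^ (1/p) * d ^ β := by positivity
    exact mul_nonneg hK0 this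
  -- the intervals are nested in [a,b]
  have hac : ∀ n, a ≤ c n := by
    intro n; induction n with
    | zero => rw [hc0]
    | succ k ih => exact ih.trans (hcmono k)
  have heb : ∀ n, e n ≤ b := by
    intro n; induction n with
    | zero => rw [he0]
    | succ k ih => exact (hemono k).trans ih
  have hIn : ∀ n, Icc (c n) (e n) ⊆ Icc a b := fun n => Icc_subset_Icc (hac n) (heb n)
  have hce : ∀ n, c n < e n := by
    intro n
    have := hlen n
    have h2n : (0:ℝ) < 2 ^ n := by positivity
    nlinarith [div_pos hdpos h2n]
  -- one-step estimate
  have hstepn : ∀ n, |avg f (c (n+1)) (e (n+1)) - avg f (c n) (e n)| ≤ M * r ^ n := by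
    intro n
    have hhalf : e (n+1) - c (n+1) = (e n - c n) / 2 := by
      rw [hlen n, hlen (n+1), pow_succ]; ring
    have hstep := step hp hα hf hQtop (hcmono n) (hemono n) (hce (n+1)) hhalf
      ((hIn n).trans hsub)
    have hpow : (e n - c n) ^ β = d ^ β * r ^ n := by
      rw [hlen n, Real.div_rpow hdpos.le (by positivity)]
      rw [← Real.rpow_natCast (2:ℝ) n, ← Real.rpow_mul two_pos.le, div_eq_mul_inv,
        ← Real.rpow_neg two_pos.le]
      congr 1
      rw [hr, ← Real.rpow_natCast ((2:ℝ) ^ (-β)) n, ← Real.rpow_mul two_pos.le]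
      congr 1
      ring
    calc |avg f (c (n+1)) (e (n+1)) - avg f (c n) (e n)|
        ≤ K * ((2:ℝ) ^ (1/p) * (e n - c n) ^ β) := hstep
      _ = M * r ^ n := by rw [hpow, hM]; ring
  -- telescoping
  have htel : ∀ N, |avg f (c N) (e N) - avg f a b| ≤ M * ∑ i ∈ Finset.range N, r ^ i := by
    intro N
    induction N with
    | zero => simp [hc0, he0]
    | succ k ih =>
        calc |avg f (c (k+1)) (e (k+1)) - avg f a b|
            ≤ |avg f (c (k+1)) (e (k+1)) - avg f (c k) (e k)|
              + |avg f (c k) (e k) - avg f a b| := abs_sub_le _ _ _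
          _ ≤ M * r ^ k + M * ∑ i ∈ Finset.range k, r ^ i := add_le_add (hstepn k) ih
          _ = M * ∑ i ∈ Finset.range (k+1), r ^ i := by
              rw [Finset.sum_range_succ]; ring
  have hgeom : ∀ N, ∑ i ∈ Finset.range N, r ^ i ≤ (1 - r)⁻¹ := by
    intro N
    rw [geom_sum_eq (ne_of_lt hr1)]
    rw [show (r ^ N - 1) / (r - 1) = (1 - r ^ N) / (1 - r) by
      rw [div_eq_div_iff (by linarith) (by linarith)]; ring]
    rw [← one_div]
    gcongr <;> nlinarith [pow_nonneg hr0.le N, h1r]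
  have htel' : ∀ N, |avg f (c N) (e N) - avg f a b| ≤ M * (1 - r)⁻¹ := fun N =>
    (htel N).trans (mul_le_mul_of_nonneg_left (hgeom N) hM0)
  -- limit step
  have hx0 : x ∈ Icc a b := by have := hx 0; rwa [hc0, he0] at this
  have hfinal : ∀ ε : ℝ, 0 < ε → |f x - avg f a b| ≤ M * (1 - r)⁻¹ + ε := by
    intro ε hε
    have hcx : ContinuousWithinAt f (Icc (0:ℝ) 1) x := hf x (hsub hx0)
    rw [Metric.continuousWithinAt_iff] at hcx
    obtain ⟨δ, hδ, hδ'⟩ := hcx ε hε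
    obtain ⟨N, hN⟩ := exists_pow_lt_of_lt_one (div_pos hδ hdpos)
      (by norm_num : (1/2 : ℝ) < 1)
    have hsmall : d / 2 ^ N < δ := by
      have : d * (1/2) ^ N < d * (δ / d) := by
        exact mul_lt_mul_of_pos_left hN hdpos
      rw [mul_div_cancel₀ _ (ne_of_gt hdpos)] at this
      calc d / 2 ^ N = d * (1/2) ^ N := by rw [div_pow, one_pow]; ring
        _ < δ := this
    have hclose : ∀ u ∈ Icc (c N) (e N), |f u - f x| ≤ ε := by
      intro u hu
      have hu1 : u ∈ Icc (0:ℝ) 1 := (hsub ((hIn N) hu))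
      have hdist : dist u x < δ := by
        rw [Real.dist_eq]
        have hxN := hx N
        have : |u - x| ≤ e N - c N := by
          rw [abs_sub_le_iff]
          constructor <;> [skip; skip] <;>
            · obtain ⟨h1', h2'⟩ := hu; obtain ⟨h3', h4'⟩ := hxN; linarith
        calc |u - x| ≤ e N - c N := this
          _ = d / 2 ^ N := hlen N
          _ < δ := hsmall
      have := hδ' hu1 hdist
      rw [Real.dist_eq] at this
      exact this.le
    have havgclose : |avg f (c N) (e N) - f x| ≤ ε :=
      avg_close hf (hce N) ((hIn N).trans hsub) hclose
    calc |f x - avg f a b|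
        ≤ |f x - avg f (c N) (e N)| + |avg f (c N) (e N) - avg f a b| := abs_sub_le _ _ _
      _ ≤ ε + M * (1 - r)⁻¹ := by
          refine add_le_add ?_ (htel' N)
          rw [abs_sub_comm]; exact havgclose
      _ = M * (1 - r)⁻¹ + ε := add_comm _ _
  have := le_of_forall_pos_le_add hfinal
  calc |f x - avg f a b| ≤ M * (1 - r)⁻¹ := this
    _ = K * ((2:ℝ) ^ (1/p) * (1 - r)⁻¹ * d ^ β) := by rw [hM]; ring

/-- Real-valued main estimate for `s < t`, finite energy case. -/
lemma main_aux (hp : 1 ≤ p) (hα : 1 / p < α) (hf : ContinuousOn f (Icc (0:ℝ) 1))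
    (hQtop : Q p α f ≠ ⊤) {s t : ℝ} (hs : s ∈ Icc (0:ℝ) 1) (ht : t ∈ Icc (0:ℝ) 1)
    (hst : s < t) :
    |f t - f s| ≤ ((Q p α f) ^ (1/p)).toReal *
      (2 * ((2:ℝ) ^ (1/p) * (1 - (2:ℝ) ^ (-(α - 1/p)))⁻¹) * (t - s) ^ (α - 1/p)) := by
  set d := t - s with hd
  have hdpos : 0 < d := sub_pos.2 hst
  have hsub : Icc s t ⊆ Icc (0:ℝ) 1 := Icc_subset_Icc hs.1 ht.2
  have hdiv : ∀ n : ℕ, d / 2 ^ (n+1) ≤ d / 2 ^ n := by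
    intro n
    exact div_le_div_of_nonneg_left hdpos.le (by positivity)
      (pow_le_pow_right₀ one_le_two (Nat.le_succ n))
  have hdivpos : ∀ n : ℕ, 0 < d / 2 ^ n := fun n => div_pos hdpos (by positivity)
  have h1 := chain hp hα hf hQtop hst hsub (fun n => t - d / 2 ^ n) (fun _ => t)
    (by simp [hd])
    rfl
    (fun n => by ring)
    (fun n => by have := hdiv n; linarith)
    (fun n => le_refl t)
    (fun n => ⟨by have := (hdivpos n).le; linarith, le_refl t⟩)
  have h2 := chain hp hα hf hQtop hst hsub (fun _ => s) (fun n => s + d / 2 ^ n)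
    rfl
    (by simp [hd])
    (fun n => by ring)
    (fun n => le_refl s)
    (fun n => by have := hdiv n; linarith)
    (fun n => ⟨le_refl s, by have := (hdivpos n).le; linarith⟩)
  calc |f t - f s| ≤ |f t - avg f s t| + |avg f s t - f s| := abs_sub_le _ _ _
    _ ≤ ((Q p α f) ^ (1/p)).toReal *
          ((2:ℝ) ^ (1/p) * (1 - (2:ℝ) ^ (-(α - 1/p)))⁻¹ * d ^ (α - 1/p)) +
        ((Q p α f) ^ (1/p)).toReal *
          ((2:ℝ) ^ (1/p) * (1 - (2:ℝ) ^ (-(α - 1/p)))⁻¹ * d ^ (α - 1/p)) := by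
        refine add_le_add h1 ?_
        rw [abs_sub_comm]
        exact h2
    _ = _ := by ring

/-- The ENNReal form of the main inequality, for `s < t`. -/
lemma main_ineq (hp : 1 ≤ p) (hα : 1 / p < α) (hf : ContinuousOn f (Icc (0:ℝ) 1))
    {s t : ℝ} (hs : s ∈ Icc (0:ℝ) 1) (ht : t ∈ Icc (0:ℝ) 1) (hst : s < t) :
    ENNReal.ofReal |f t - f s|
      ≤ ENNReal.ofReal (2 * ((2:ℝ) ^ (1/p) * (1 - (2:ℝ) ^ (-(α - 1/p)))⁻¹))
        * (Q p α f) ^ (1/p) * ENNReal.ofReal (|t - s| ^ (α - 1/p)) := by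
  have hpp := hp0 hp
  have hβpos : 0 < α - 1/p := hβ0 hp hα
  have hdpos : 0 < t - s := sub_pos.2 hst
  have habs : |t - s| = t - s := abs_of_pos hdpos
  have hr1 : (2:ℝ) ^ (-(α - 1/p)) < 1 :=
    Real.rpow_lt_one_of_one_lt_of_neg one_lt_two (neg_lt_zero.2 hβpos)
  have hc₀pos : (0:ℝ) < 2 * ((2:ℝ) ^ (1/p) * (1 - (2:ℝ) ^ (-(α - 1/p)))⁻¹) := by
    have h2p : (0:ℝ) < (2:ℝ) ^ (1/p) := Real.rpow_pos_of_pos two_pos _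
    have : (0:ℝ) < (1 - (2:ℝ) ^ (-(α - 1/p)))⁻¹ := inv_pos.2 (by linarith)
    positivity
  rcases eq_or_ne (Q p α f) ⊤ with hQ | hQ
  · -- infinite energy: RHS is ⊤
    have hC0 : ENNReal.ofReal (2 * ((2:ℝ) ^ (1/p) * (1 - (2:ℝ) ^ (-(α - 1/p)))⁻¹)) ≠ 0 :=
      ne_of_gt (ENNReal.ofReal_pos.2 hc₀pos)
    have hQt : (Q p α f) ^ (1/p) = ⊤ := by
      rw [hQ]; exact ENNReal.top_rpow_of_pos (by positivity)
    have hd0 : ENNReal.ofReal (|t - s| ^ (α - 1/p)) ≠ 0 := by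
      rw [habs]
      exact ne_of_gt (ENNReal.ofReal_pos.2 (Real.rpow_pos_of_pos hdpos _))
    rw [hQt, ENNReal.mul_top hC0, ENNReal.top_mul hd0]
    exact le_top
  · -- finite energy
    have hK0 : (0:ℝ) ≤ ((Q p α f) ^ (1/p)).toReal := ENNReal.toReal_nonneg
    have hmain := main_aux hp hα hf hQ hs ht hst
    calc ENNReal.ofReal |f t - f s|
        ≤ ENNReal.ofReal (((Q p α f) ^ (1/p)).toReal *
            (2 * ((2:ℝ) ^ (1/p) * (1 - (2:ℝ) ^ (-(α - 1/p)))⁻¹) * (t - s) ^ (α - 1/p))) :=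
          ENNReal.ofReal_le_ofReal hmain
      _ = ENNReal.ofReal (2 * ((2:ℝ) ^ (1/p) * (1 - (2:ℝ) ^ (-(α - 1/p)))⁻¹))
            * ENNReal.ofReal (((Q p α f) ^ (1/p)).toReal)
            * ENNReal.ofReal ((t - s) ^ (α - 1/p)) := by
          rw [← ENNReal.ofReal_mul hc₀pos.le, ← ENNReal.ofReal_mul (by positivity)]
          congr 1
          ring
      _ ≤ ENNReal.ofReal (2 * ((2:ℝ) ^ (1/p) * (1 - (2:ℝ) ^ (-(α - 1/p)))⁻¹))
            * (Q p α f) ^ (1/p) * ENNReal.ofReal (|t - s| ^ (α - 1/p)) := by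
          rw [habs]
          exact mul_le_mul_left (mul_le_mul_right ENNReal.ofReal_toReal_le _) _

end GRR

open GRR in
/-- **Classical Garsia–Rodemich–Rumsey inequality on `[0,1]`.**  For `p ≥ 1`, `α > 1/p`,
there is a constant `C_{α,p}` such that every continuous `f : [0,1] → ℝ` satisfies
`|f(t) − f(s)| ≤ C_{α,p} (∬ |f(u)−f(v)|^p / |u−v|^{αp+1} du dv)^{1/p} |t−s|^{α−1/p}`. -/
theorem stmt15 (p α : ℝ) (hp : 1 ≤ p) (hα : 1 / p < α) :
    ∃ C : ℝ≥0∞, 0 < C ∧ C ≠ ⊤ ∧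
      ∀ f : ℝ → ℝ, ContinuousOn f (Set.Icc 0 1) →
        ∀ s ∈ Set.Icc (0 : ℝ) 1, ∀ t ∈ Set.Icc (0 : ℝ) 1,
          ENNReal.ofReal |f t - f s|
            ≤ C *
              (∫⁻ u in Set.Icc (0 : ℝ) 1, ∫⁻ v in Set.Icc (0 : ℝ) 1,
                  ENNReal.ofReal (|f u - f v| ^ p)
                    / ENNReal.ofReal (|u - v| ^ (α * p + 1))) ^ (1 / p)
              * ENNReal.ofReal (|t - s| ^ (α - 1 / p)) := by
  have hβpos : 0 < α - 1/p := hβ0 hp hα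
  have hr1 : (2:ℝ) ^ (-(α - 1/p)) < 1 :=
    Real.rpow_lt_one_of_one_lt_of_neg one_lt_two (neg_lt_zero.2 hβpos)
  have hc₀pos : (0:ℝ) < 2 * ((2:ℝ) ^ (1/p) * (1 - (2:ℝ) ^ (-(α - 1/p)))⁻¹) := by
    have h2p : (0:ℝ) < (2:ℝ) ^ (1/p) := Real.rpow_pos_of_pos two_pos _
    have : (0:ℝ) < (1 - (2:ℝ) ^ (-(α - 1/p)))⁻¹ := inv_pos.2 (by linarith)
    positivity
  refine ⟨ENNReal.ofReal (2 * ((2:ℝ) ^ (1/p) * (1 - (2:ℝ) ^ (-(α - 1/p)))⁻¹)),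
    ENNReal.ofReal_pos.2 hc₀pos, ENNReal.ofReal_ne_top, ?_⟩
  intro f hf s hs t ht
  have hQeq : (∫⁻ u in Set.Icc (0:ℝ) 1, ∫⁻ v in Set.Icc (0:ℝ) 1,
      ENNReal.ofReal (|f u - f v| ^ p) / ENNReal.ofReal (|u - v| ^ (α * p + 1)))
      = Q p α f := rfl
  rw [hQeq]
  rcases lt_trichotomy s t with hst | hst | hst
  · exact main_ineq hp hα hf hs ht hst
  · subst hst
    simp
  · have := main_ineq hp hα hf ht hs hst
    rw [abs_sub_comm (f s) (f t), abs_sub_comm s t] at this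
    exact this
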